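/- Let X = ℤⁿ with standard basis e₁,…,eₙ, let G be a commutative group, u : X → G a homomorphism, Γ a commutative group, and λ : X → Hom(G,Γ) a homomorphism with λ(x)(u(y)) = λ(y)(u(x)) for all x, y. Define δ_λ : X × G → Γ by δ_λ(x,g) = λ(x)(g) · ∏ᵢ λ(eᵢ)(u(eᵢ))^{nᵢ(nᵢ−1)/2} · ∏_{i<j} λ(eᵢ)(u(e_j))^{nᵢn_j}, where x = Σ nᵢeᵢ. Then δ_λ satisfies the cocycle condition δ_λ(x+y,g) = δ_λ(x, u(y)g)·δ_λ(y,g), and moreover δ_λ(x,g)·δ_λ(x,1)⁻¹ = λ(x)(g). -/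

import Mathlib

lemma stmt4_half_add (a b : ℤ) :
    (a + b) * ((a + b) - 1) / 2 = a * (a - 1) / 2 + b * (b - 1) / 2 + a * b := by
  obtain ⟨p, hp⟩ : Even (a * (a - 1)) := by
    have := Int.even_mul_succ_self (a - 1)
    simpa [mul_comm] using this
  obtain ⟨q, hq⟩ : Even (b * (b - 1)) := by
    have := Int.even_mul_succ_self (b - 1)
    simpa [mul_comm] using this
  set c := a * b with hc
  have hr : (a + b) * ((a + b) - 1) = (p + q + c) + (p + q + c) := by
    linear_combination hp + hq
  rw [hp, hq, hr]
  omega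

lemma stmt4_expand {n : ℕ} {Γ : Type*} [CommGroup Γ] (F : (Fin n → ℤ) → Γ)
    (hF : ∀ a b, F (a + b) = F a * F b) (x : Fin n → ℤ) :
    F x = ∏ i, F (Pi.single i 1) ^ (x i) := by
  have h0 : F 0 = 1 := by
    have h := hF 0 0
    rw [add_zero] at h
    exact (left_eq_mul.mp h)
  have hz : ∀ (k : ℤ) (a : Fin n → ℤ), F (k • a) = F a ^ k := by
    intro k a
    induction k using Int.induction_on with
    | zero => simpa using h0
    | succ m ih =>
        rw [add_smul, one_smul, hF, ih, zpow_add, zpow_one]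
    | pred m ih =>
        have h1 : F ((-(m : ℤ) - 1) • a) * F a = F ((-(m : ℤ)) • a) := by
          rw [← hF]; congr 1; rw [sub_smul, one_smul, sub_add_cancel]
        have h2 : F ((-(m : ℤ) - 1) • a) = F ((-(m : ℤ)) • a) * (F a)⁻¹ :=
          eq_mul_inv_of_mul_eq h1
        have h3 : (-(m:ℤ) - 1) = -(m:ℤ) + -1 := by ring
        rw [h2, ih, ← zpow_neg_one, ← zpow_add, h3]
  have hsum : ∀ (s : Finset (Fin n)) (f : Fin n → Fin n → ℤ),
      F (∑ i ∈ s, f i) = ∏ i ∈ s, F (f i) := by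
    intro s f
    induction s using Finset.cons_induction with
    | empty => simpa using h0
    | cons a s ha ih => rw [Finset.sum_cons, Finset.prod_cons, hF, ih]
  calc F x = F (∑ i, Pi.single i (x i)) := by rw [Finset.univ_sum_single]
    _ = ∏ i, F (Pi.single i (x i)) := hsum _ _
    _ = ∏ i, F (Pi.single i 1) ^ (x i) := by
        refine Finset.prod_congr rfl fun i _ => ?_
        rw [← hz]
        congr 1
        rw [← Pi.single_smul, smul_eq_mul, mul_one]

lemma stmt4_tri {n : ℕ} {Γ : Type*} [CommMonoid Γ] (g : Fin n → Fin n → Γ) :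
    ∏ i, ∏ j, g i j =
      (∏ i, g i i) * ∏ i, ∏ j ∈ Finset.Ioi i, (g i j * g j i) := by
  have h1 : ∀ i : Fin n, ∏ j, g i j = g i i * ∏ j ∈ ({i}ᶜ : Finset (Fin n)), g i j := by
    intro i
    rw [Finset.prod_eq_mul_prod_sdiff_singleton_of_mem (Finset.mem_univ i), Finset.compl_eq_univ_sdiff]
  calc ∏ i, ∏ j, g i j = ∏ i, (g i i * ∏ j ∈ ({i}ᶜ : Finset (Fin n)), g i j) :=
        Finset.prod_congr rfl fun i _ => h1 i
    _ = (∏ i, g i i) * ∏ i, ∏ j ∈ ({i}ᶜ : Finset (Fin n)), g i j :=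
        Finset.prod_mul_distrib
    _ = (∏ i, g i i) * ∏ i, ∏ j ∈ Finset.Ioi i, (g i j * g j i) := by
        congr 1
        have h2 := (Finset.prod_prod_Ioi_mul_eq_prod_prod_off_diag (fun a b => g b a)).symm
        convert h2 using 2

/-- For X = ℤⁿ with standard basis e, and λ ∈ Λ, the explicit
δ_λ(x,g) = λ(x)(g)·∏ᵢ λ(eᵢ)(u(eᵢ))^{nᵢ(nᵢ-1)/2}·∏_{i<j} λ(eᵢ)(u(e_j))^{nᵢn_j}
is a cocycle with λ_{δ_λ} = λ. -/
theorem stmt_4 {n : ℕ} {G Γ : Type*} [CommGroup G] [CommGroup Γ]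
    (u : (Fin n → ℤ) → G) (hu : ∀ x y, u (x + y) = u x * u y)
    (lam : (Fin n → ℤ) → G → Γ)
    (hadd : ∀ x y g, lam (x + y) g = lam x g * lam y g)
    (hmul : ∀ x g g', lam x (g * g') = lam x g * lam x g')
    (hsym : ∀ x y, lam x (u y) = lam y (u x))
    (e : Fin n → (Fin n → ℤ)) (he : ∀ i, e i = Pi.single i 1)
    (δ : (Fin n → ℤ) → G → Γ)
    (hδdef : ∀ x g, δ x g =
      lam x g * (∏ i : Fin n, (lam (e i) (u (e i))) ^ ((x i * (x i - 1)) / 2)) *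
        ∏ i : Fin n, ∏ j ∈ Finset.Ioi i, (lam (e i) (u (e j))) ^ (x i * x j)) :
    (∀ x y g, δ (x + y) g = δ x (u y * g) * δ y g) ∧
      (∀ x g, δ x g * (δ x 1)⁻¹ = lam x g) := by
  simp only [he] at hδdef
  set C : Fin n → Fin n → Γ := fun i j => lam (Pi.single i 1) (u (Pi.single j 1)) with hC
  have hCsym : ∀ i j, C j i = C i j := fun i j => hsym _ _
  have hbil : ∀ x y : Fin n → ℤ, lam x (u y) = ∏ i, ∏ j, C i j ^ (x i * y j) := by
    intro x y
    have h1 := stmt4_expand (fun z => lam z (u y)) (fun a b => hadd a b (u y)) x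
    have h2 : ∀ i, lam (Pi.single i 1) (u y) = ∏ j, C i j ^ (y j) := fun i =>
      stmt4_expand (fun z => lam (Pi.single i 1) (u z))
        (fun a b => by simp only [hu, hmul]) y
    rw [h1]
    refine Finset.prod_congr rfl fun i _ => ?_
    rw [h2, ← Finset.prod_zpow]
    refine Finset.prod_congr rfl fun j _ => ?_
    rw [← zpow_mul, mul_comm (y j)]
  have hbil2 : ∀ x y : Fin n → ℤ, lam x (u y) =
      (∏ i, C i i ^ (x i * y i)) *
        ∏ i, ∏ j ∈ Finset.Ioi i, C i j ^ (x i * y j + y i * x j) := by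
    intro x y
    rw [hbil x y, stmt4_tri (fun i j => C i j ^ (x i * y j))]
    congr 1
    refine Finset.prod_congr rfl fun i _ => Finset.prod_congr rfl fun j _ => ?_
    rw [hCsym i j, ← zpow_add]
    congr 1
    ring
  constructor
  · intro x y g
    have hP : (∏ i, C i i ^ ((x + y) i * ((x + y) i - 1) / 2)) =
        ((∏ i, C i i ^ (x i * (x i - 1) / 2)) * ∏ i, C i i ^ (y i * (y i - 1) / 2)) *
          ∏ i, C i i ^ (x i * y i) := by
      rw [← Finset.prod_mul_distrib, ← Finset.prod_mul_distrib]
      refine Finset.prod_congr rfl fun i _ => ?_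
      rw [Pi.add_apply, stmt4_half_add, zpow_add, zpow_add]
    have hQ : (∏ i, ∏ j ∈ Finset.Ioi i, C i j ^ ((x + y) i * (x + y) j)) =
        ((∏ i, ∏ j ∈ Finset.Ioi i, C i j ^ (x i * x j)) *
            ∏ i, ∏ j ∈ Finset.Ioi i, C i j ^ (y i * y j)) *
          ∏ i, ∏ j ∈ Finset.Ioi i, C i j ^ (x i * y j + y i * x j) := by
      rw [← Finset.prod_mul_distrib, ← Finset.prod_mul_distrib]
      refine Finset.prod_congr rfl fun i _ => ?_
      rw [← Finset.prod_mul_distrib, ← Finset.prod_mul_distrib]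
      refine Finset.prod_congr rfl fun j _ => ?_
      rw [Pi.add_apply, Pi.add_apply,
        show (x i + y i) * (x j + y j)
          = (x i * x j + y i * y j) + (x i * y j + y i * x j) from by ring,
        zpow_add, zpow_add]
    rw [hδdef, hδdef, hδdef, hadd, hmul, hbil2 x y, hP, hQ]
    simp only [hC]
    ac_rfl
  · intro x g
    have hone : lam x 1 = 1 := by
      have h := hmul x 1 1
      rw [mul_one] at h
      exact (left_eq_mul.mp h)
    rw [hδdef, hδdef, hone, one_mul]
    group
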